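/- (Holographic ergodicity.) Let χ : ℤ₂³ → ℤ₂ be a local rule that is reversible (χ(w, χ(w,n,e), e) = n for all w,n,e) and preserves the empty state (χ(0,0,0) = 0), let n be even, and let P^L, P^R be 4×4 stochastic matrices (nonnegative entries, each column summing to 1). Define the Markov propagator U = U_o U_e on probability vectors over ℤ₂ⁿ, with U_e = P₁₂₃ P₃₄₅ ⋯ P_{n−3,n−2,n−1} P^R_{n−1,n} and U_o = P^L₁₂ P₂₃₄ ⋯ P_{n−2,n−1,n}. Suppose: (i) both boundary cell states are accessible from any configuration, i.e., P^L_{(s,s'),(t,s')} > 0 and P^R_{(s',s),(s',t)} > 0 for all s, t, s' ∈ ℤ₂; (ii) the bulk deterministic dynamics is asymptotically abelian: for the automaton on the infinite lattice ℤ, for every finite A ⊂ ℤ, every initial configuration supported in A (i.e., s_{x,t} = 0 for all x ∉ A, t ∈ {0,1}), and every finite B ⊂ ℤ, there exists t* such that s_{x,t} = 0 for all x ∈ B and t > t*. Then U is irreducible (for every pair of configurations 𝐬, 𝐬' there exists t₀ ∈ ℕ with (U^{t₀})_{𝐬,𝐬'} > 0) and aperiodic (for some configuration 𝐬 the greatest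 common divisor of the return times t with (U^t)_{𝐬,𝐬} > 0 equals 1); i.e., the Markov chain is ergodic and mixing. -/

import Mathlib

/- STATEMENT 12 (Holographic ergodicity): for a reversible, vacuum-preserving
local rule χ whose bulk dynamics is asymptotically abelian, and stochastic
boundary matrices making both boundary cell states accessible, the Markov
propagator U = U_o U_e is irreducible and aperiodic. -/

noncomputable section

/-- The bulk permutation matrix of a local rule `χ` acting on sites
`a, b, c` (= k, k+1, k+2): `(P v)_σ = v_{σ with middle cell updated by χ}`. -/
def P3mat {n : ℕ} (χ : ZMod 2 → ZMod 2 → ZMod 2 → ZMod 2) (a b c : Fin n) :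
    Matrix (Fin n → ZMod 2) (Fin n → ZMod 2) ℝ :=
  fun σ τ => if τ = Function.update σ b (χ (σ a) (σ b) (σ c)) then 1 else 0

/-- A two-site matrix `B` acting on sites `i, j` of the chain. -/
def P2mat {n : ℕ} (B : Matrix (ZMod 2 × ZMod 2) (ZMod 2 × ZMod 2) ℝ)
    (i j : Fin n) : Matrix (Fin n → ZMod 2) (Fin n → ZMod 2) ℝ :=
  fun σ τ =>
    (if ∀ k, k ≠ i → k ≠ j → σ k = τ k then 1 else 0) * B (σ i, σ j) (τ i, τ j)

/-- `⟨k % n, _⟩ : Fin n`. -/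
def fin' (n : ℕ) (hn : 0 < n) (k : ℕ) : Fin n := ⟨k % n, Nat.mod_lt _ hn⟩

/-- The even half-step propagator `U_e = P₁₂₃ P₃₄₅ ⋯ P_{n−3,n−2,n−1} P^R_{n−1,n}`. -/
def Ue (n : ℕ) (hn : 0 < n) (χ : ZMod 2 → ZMod 2 → ZMod 2 → ZMod 2)
    (PR : Matrix (ZMod 2 × ZMod 2) (ZMod 2 × ZMod 2) ℝ) :
    Matrix (Fin n → ZMod 2) (Fin n → ZMod 2) ℝ :=
  ((List.range ((n - 2) / 2)).map fun i =>
      P3mat χ (fin' n hn (2 * i)) (fin' n hn (2 * i + 1)) (fin' n hn (2 * i + 2))).prod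
    * P2mat PR (fin' n hn (n - 2)) (fin' n hn (n - 1))

/-- The odd half-step propagator `U_o = P^L₁₂ P₂₃₄ P₄₅₆ ⋯ P_{n−2,n−1,n}`. -/
def Uo (n : ℕ) (hn : 0 < n) (χ : ZMod 2 → ZMod 2 → ZMod 2 → ZMod 2)
    (PL : Matrix (ZMod 2 × ZMod 2) (ZMod 2 × ZMod 2) ℝ) :
    Matrix (Fin n → ZMod 2) (Fin n → ZMod 2) ℝ :=
  P2mat PL (fin' n hn 0) (fin' n hn 1) *
    ((List.range ((n - 2) / 2)).map fun i =>
      P3mat χ (fin' n hn (2 * i + 1)) (fin' n hn (2 * i + 2)) (fin' n hn (2 * i + 3))).prod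

/-- One even time layer of the deterministic bulk dynamics on the infinite
lattice ℤ (in the saw-configuration encoding): even cells are updated. -/
def stepE (χ : ZMod 2 → ZMod 2 → ZMod 2 → ZMod 2) (c : ℤ → ZMod 2) :
    ℤ → ZMod 2 :=
  fun x => if Even x then χ (c (x - 1)) (c x) (c (x + 1)) else c x

/-- One odd time layer: odd cells are updated. -/
def stepO (χ : ZMod 2 → ZMod 2 → ZMod 2 → ZMod 2) (c : ℤ → ZMod 2) :
    ℤ → ZMod 2 :=
  fun x => if ¬ Even x then χ (c (x - 1)) (c x) (c (x + 1)) else c x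

/-- One full time step of the deterministic bulk dynamics on ℤ. -/
def bulkStep (χ : ZMod 2 → ZMod 2 → ZMod 2 → ZMod 2) (c : ℤ → ZMod 2) :
    ℤ → ZMod 2 :=
  stepO χ (stepE χ c)

namespace Holo

variable {n : ℕ}

/-! ### generic matrix entry lemmas -/

lemma mul_nonneg' {I : Type*} [Fintype I] {A B : Matrix I I ℝ}
    (hA : ∀ i j, 0 ≤ A i j) (hB : ∀ i j, 0 ≤ B i j) (i j : I) : 0 ≤ (A * B) i j := by
  rw [Matrix.mul_apply]
  exact Finset.sum_nonneg fun k _ => mul_nonneg (hA i k) (hB k j)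

lemma entry_mul_le {I : Type*} [Fintype I] {A B : Matrix I I ℝ}
    (hA : ∀ i j, 0 ≤ A i j) (hB : ∀ i j, 0 ≤ B i j) (i k j : I) :
    A i k * B k j ≤ (A * B) i j := by
  rw [Matrix.mul_apply]
  exact Finset.single_le_sum (fun l _ => mul_nonneg (hA i l) (hB l j)) (Finset.mem_univ k)

lemma mul_entry_pos {I : Type*} [Fintype I] {A B : Matrix I I ℝ}
    (hA : ∀ i j, 0 ≤ A i j) (hB : ∀ i j, 0 ≤ B i j) {i j : I} (k : I)
    (h1 : 0 < A i k) (h2 : 0 < B k j) : 0 < (A * B) i j :=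
  lt_of_lt_of_le (mul_pos h1 h2) (entry_mul_le hA hB i k j)

lemma one_nonneg' {I : Type*} [Fintype I] [DecidableEq I] (i j : I) :
    0 ≤ (1 : Matrix I I ℝ) i j := by
  rw [Matrix.one_apply]; split <;> norm_num

lemma listprod_nonneg {I : Type*} [Fintype I] [DecidableEq I] (L : List (Matrix I I ℝ))
    (h : ∀ M ∈ L, ∀ i j, 0 ≤ M i j) : ∀ i j, 0 ≤ L.prod i j := by
  induction L with
  | nil => simpa using fun i j => one_nonneg' i j
  | cons M L ih =>
      intro i j
      rw [List.prod_cons]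
      exact mul_nonneg' (h M (by simp)) (ih fun M' hM' => h M' (by simp [hM'])) i j

/-! ### fin' helpers -/

lemma fin'_eq_mk (hn : 0 < n) {k : ℕ} (hk : k < n) : fin' n hn k = ⟨k, hk⟩ := by
  apply Fin.ext; simp [fin', Nat.mod_eq_of_lt hk]

lemma fin'_val (hn : 0 < n) {k : ℕ} (hk : k < n) : ((fin' n hn k : Fin n) : ℕ) = k := by
  rw [fin'_eq_mk hn hk]

lemma fin'_ne (hn : 0 < n) {a b : ℕ} (ha : a < n) (hb : b < n) (h : a ≠ b) :
    fin' n hn a ≠ fin' n hn b := by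
  rw [fin'_eq_mk hn ha, fin'_eq_mk hn hb]
  simp [Fin.ext_iff]; exact h

lemma ne_fin' (hn : 0 < n) {k : Fin n} {j : ℕ} (hj : j < n) (h : (k : ℕ) ≠ j) :
    k ≠ fin' n hn j := by
  rw [fin'_eq_mk hn hj]
  exact fun he => h (by rw [he])

/-! ### the local update and its involutivity -/

def upd3 (χ : ZMod 2 → ZMod 2 → ZMod 2 → ZMod 2) (a b c : Fin n) (τ : Fin n → ZMod 2) :
    Fin n → ZMod 2 :=
  Function.update τ b (χ (τ a) (τ b) (τ c))

lemma upd3_invol (χ : ZMod 2 → ZMod 2 → ZMod 2 → ZMod 2)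
    (hrev : ∀ w m e : ZMod 2, χ w (χ w m e) e = m)
    {a b c : Fin n} (hab : a ≠ b) (hcb : c ≠ b) (τ : Fin n → ZMod 2) :
    upd3 χ a b c (upd3 χ a b c τ) = τ := by
  unfold upd3
  rw [Function.update_of_ne hab, Function.update_of_ne hcb, Function.update_self, hrev,
    Function.update_idem, Function.update_eq_self]

lemma P3mat_eq_if (χ : ZMod 2 → ZMod 2 → ZMod 2 → ZMod 2) (a b c : Fin n)
    (σ τ : Fin n → ZMod 2) :
    P3mat χ a b c σ τ = if τ = upd3 χ a b c σ then 1 else 0 := rfl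

lemma P3mat_nonneg (χ : ZMod 2 → ZMod 2 → ZMod 2 → ZMod 2) (a b c : Fin n)
    (σ τ : Fin n → ZMod 2) : 0 ≤ P3mat χ a b c σ τ := by
  rw [P3mat_eq_if]; split <;> norm_num

lemma P3mat_self (χ : ZMod 2 → ZMod 2 → ZMod 2 → ZMod 2)
    (hrev : ∀ w m e : ZMod 2, χ w (χ w m e) e = m)
    {a b c : Fin n} (hab : a ≠ b) (hcb : c ≠ b) (τ : Fin n → ZMod 2) :
    P3mat χ a b c (upd3 χ a b c τ) τ = 1 := by
  rw [P3mat_eq_if, if_pos (upd3_invol χ hrev hab hcb τ).symm]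

/-! ### two-site matrices -/

lemma P2mat_nonneg {B : Matrix (ZMod 2 × ZMod 2) (ZMod 2 × ZMod 2) ℝ}
    (hB : ∀ p q, 0 ≤ B p q) (i j : Fin n) (σ τ : Fin n → ZMod 2) :
    0 ≤ P2mat B i j σ τ := by
  unfold P2mat
  refine mul_nonneg ?_ (hB _ _)
  split <;> norm_num

lemma P2mat_update_right {B : Matrix (ZMod 2 × ZMod 2) (ZMod 2 × ZMod 2) ℝ}
    {i j : Fin n} (hij : i ≠ j) (τ : Fin n → ZMod 2) (v : ZMod 2) :
    P2mat B i j (Function.update τ j v) τ = B (τ i, v) (τ i, τ j) := by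
  unfold P2mat
  rw [if_pos (by intro k _ hkj; rw [Function.update_of_ne hkj]),
    Function.update_of_ne hij, Function.update_self, one_mul]

lemma P2mat_update_left {B : Matrix (ZMod 2 × ZMod 2) (ZMod 2 × ZMod 2) ℝ}
    {i j : Fin n} (hji : j ≠ i) (τ : Fin n → ZMod 2) (v : ZMod 2) :
    P2mat B i j (Function.update τ i v) τ = B (v, τ j) (τ i, τ j) := by
  unfold P2mat
  rw [if_pos (by intro k hki _; rw [Function.update_of_ne hki]),
    Function.update_of_ne hji, Function.update_self, one_mul]


/-! ### sequential bulk update maps -/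

def FE (n : ℕ) (hn : 0 < n) (χ : ZMod 2 → ZMod 2 → ZMod 2 → ZMod 2) :
    ℕ → (Fin n → ZMod 2) → (Fin n → ZMod 2)
  | 0, τ => τ
  | m + 1, τ =>
      FE n hn χ m
        (upd3 χ (fin' n hn (2*m)) (fin' n hn (2*m+1)) (fin' n hn (2*m+2)) τ)

def FO (n : ℕ) (hn : 0 < n) (χ : ZMod 2 → ZMod 2 → ZMod 2 → ZMod 2) :
    ℕ → (Fin n → ZMod 2) → (Fin n → ZMod 2)
  | 0, τ => τ
  | m + 1, τ =>
      FO n hn χ m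
        (upd3 χ (fin' n hn (2*m+1)) (fin' n hn (2*m+2)) (fin' n hn (2*m+3)) τ)

variable (hn : 0 < n) (χ : ZMod 2 → ZMod 2 → ZMod 2 → ZMod 2)

/-! ### evaluation lemmas -/

lemma FE_eval_ne (m : ℕ) (hm : 2*m + 2 ≤ n) (τ : Fin n → ZMod 2) (k : Fin n)
    (hk : ∀ i < m, (k : ℕ) ≠ 2*i + 1) : FE n hn χ m τ k = τ k := by
  induction m generalizing τ with
  | zero => rfl
  | succ m ih =>
      rw [FE, ih (by omega) _ (fun i hi => hk i (by omega)), upd3,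
        Function.update_of_ne (ne_fin' hn (by omega) (hk m (by omega)))]

lemma FE_eval_mid (m : ℕ) (hm : 2*m + 2 ≤ n) (τ : Fin n → ZMod 2) (i : ℕ) (hi : i < m) :
    FE n hn χ m τ (fin' n hn (2*i+1)) =
      χ (τ (fin' n hn (2*i))) (τ (fin' n hn (2*i+1))) (τ (fin' n hn (2*i+2))) := by
  induction m generalizing τ with
  | zero => omega
  | succ m ih =>
      rcases Nat.lt_or_ge i m with him | him
      · rw [FE, ih (by omega) _ him, upd3,
          Function.update_of_ne (fin'_ne hn (by omega) (by omega) (by omega)),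
          Function.update_of_ne (fin'_ne hn (by omega) (by omega) (by omega)),
          Function.update_of_ne (fin'_ne hn (by omega) (by omega) (by omega))]
      · have : i = m := by omega
        subst this
        rw [FE, FE_eval_ne hn χ i (by omega) _ _
            (fun i' hi' => by rw [fin'_val hn (by omega)]; omega),
          upd3, Function.update_self]

lemma FO_eval_ne (m : ℕ) (hm : 2*m + 2 ≤ n) (τ : Fin n → ZMod 2) (k : Fin n)
    (hk : ∀ i < m, (k : ℕ) ≠ 2*i + 2) : FO n hn χ m τ k = τ k := by
  induction m generalizing τ with
  | zero => rfl
  | succ m ih =>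
      rw [FO, ih (by omega) _ (fun i hi => hk i (by omega)), upd3,
        Function.update_of_ne (ne_fin' hn (by omega) (hk m (by omega)))]

lemma FO_eval_mid (m : ℕ) (hm : 2*m + 2 ≤ n) (τ : Fin n → ZMod 2) (i : ℕ) (hi : i < m) :
    FO n hn χ m τ (fin' n hn (2*i+2)) =
      χ (τ (fin' n hn (2*i+1))) (τ (fin' n hn (2*i+2))) (τ (fin' n hn (2*i+3))) := by
  induction m generalizing τ with
  | zero => omega
  | succ m ih =>
      rcases Nat.lt_or_ge i m with him | him
      · rw [FO, ih (by omega) _ him, upd3,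
          Function.update_of_ne (fin'_ne hn (by omega) (by omega) (by omega)),
          Function.update_of_ne (fin'_ne hn (by omega) (by omega) (by omega)),
          Function.update_of_ne (fin'_ne hn (by omega) (by omega) (by omega))]
      · have : i = m := by omega
        subst this
        rw [FO, FO_eval_ne hn χ i (by omega) _ _
            (fun i' hi' => by rw [fin'_val hn (by omega)]; omega),
          upd3, Function.update_self]

/-! ### injectivity -/

lemma FE_inj (hrev : ∀ w m e : ZMod 2, χ w (χ w m e) e = m) (m : ℕ) (hm : 2*m + 2 ≤ n) :
    Function.Injective (FE n hn χ m) := by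
  induction m with
  | zero => exact fun τ τ' h => h
  | succ m ih =>
      intro τ τ' h
      rw [FE, FE] at h
      have h2 := ih (by omega) h
      have hinv : Function.Involutive
          (upd3 χ (fin' n hn (2*m)) (fin' n hn (2*m+1)) (fin' n hn (2*m+2))) :=
        fun τ => upd3_invol χ hrev (fin'_ne hn (by omega) (by omega) (by omega))
          (fin'_ne hn (by omega) (by omega) (by omega)) τ
      exact hinv.injective h2

lemma FO_inj (hrev : ∀ w m e : ZMod 2, χ w (χ w m e) e = m) (m : ℕ) (hm : 2*m + 2 ≤ n) :
    Function.Injective (FO n hn χ m) := by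
  induction m with
  | zero => exact fun τ τ' h => h
  | succ m ih =>
      intro τ τ' h
      rw [FO, FO] at h
      have h2 := ih (by omega) h
      have hinv : Function.Involutive
          (upd3 χ (fin' n hn (2*m+1)) (fin' n hn (2*m+2)) (fin' n hn (2*m+3))) :=
        fun τ => upd3_invol χ hrev (fin'_ne hn (by omega) (by omega) (by omega))
          (fin'_ne hn (by omega) (by omega) (by omega)) τ
      exact hinv.injective h2

/-! ### product entry lower bounds -/

lemma prodE_nonneg (m : ℕ) (σ τ : Fin n → ZMod 2) :
    0 ≤ (((List.range m).map fun i =>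
      P3mat χ (fin' n hn (2*i)) (fin' n hn (2*i+1)) (fin' n hn (2*i+2))).prod) σ τ :=
  listprod_nonneg _ (by
    intro M hM
    simp only [List.mem_map] at hM
    obtain ⟨i, _, rfl⟩ := hM
    exact fun σ τ => P3mat_nonneg χ _ _ _ σ τ) σ τ

lemma prodO_nonneg (m : ℕ) (σ τ : Fin n → ZMod 2) :
    0 ≤ (((List.range m).map fun i =>
      P3mat χ (fin' n hn (2*i+1)) (fin' n hn (2*i+2)) (fin' n hn (2*i+3))).prod) σ τ :=
  listprod_nonneg _ (by
    intro M hM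
    simp only [List.mem_map] at hM
    obtain ⟨i, _, rfl⟩ := hM
    exact fun σ τ => P3mat_nonneg χ _ _ _ σ τ) σ τ

lemma prodE_entry (hrev : ∀ w m e : ZMod 2, χ w (χ w m e) e = m)
    (m : ℕ) (hm : 2*m + 2 ≤ n) (τ : Fin n → ZMod 2) :
    (1 : ℝ) ≤ (((List.range m).map fun i =>
      P3mat χ (fin' n hn (2*i)) (fin' n hn (2*i+1)) (fin' n hn (2*i+2))).prod)
        (FE n hn χ m τ) τ := by
  induction m generalizing τ with
  | zero => simp [FE, Matrix.one_apply_eq]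
  | succ m ih =>
      rw [List.range_succ, List.map_append, List.prod_append, List.map_singleton,
        List.prod_singleton, FE]
      set g := upd3 χ (fin' n hn (2*m)) (fin' n hn (2*m+1)) (fin' n hn (2*m+2))
      calc (1:ℝ) = 1 * 1 := (one_mul 1).symm
        _ ≤ (((List.range m).map fun i =>
              P3mat χ (fin' n hn (2*i)) (fin' n hn (2*i+1)) (fin' n hn (2*i+2))).prod)
                (FE n hn χ m (g τ)) (g τ) *
            P3mat χ (fin' n hn (2*m)) (fin' n hn (2*m+1)) (fin' n hn (2*m+2)) (g τ) τ := by
              rw [P3mat_self χ hrev (fin'_ne hn (by omega) (by omega) (by omega))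
                (fin'_ne hn (by omega) (by omega) (by omega)) τ]
              exact mul_le_mul_of_nonneg_right (ih (by omega) (g τ)) (by norm_num)
        _ ≤ _ := entry_mul_le (fun σ' τ' => prodE_nonneg hn χ m σ' τ')
              (fun σ' τ' => P3mat_nonneg χ _ _ _ σ' τ') _ (g τ) τ

lemma prodO_entry (hrev : ∀ w m e : ZMod 2, χ w (χ w m e) e = m)
    (m : ℕ) (hm : 2*m + 2 ≤ n) (τ : Fin n → ZMod 2) :
    (1 : ℝ) ≤ (((List.range m).map fun i =>
      P3mat χ (fin' n hn (2*i+1)) (fin' n hn (2*i+2)) (fin' n hn (2*i+3))).prod)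
        (FO n hn χ m τ) τ := by
  induction m generalizing τ with
  | zero => simp [FO, Matrix.one_apply_eq]
  | succ m ih =>
      rw [List.range_succ, List.map_append, List.prod_append, List.map_singleton,
        List.prod_singleton, FO]
      set g := upd3 χ (fin' n hn (2*m+1)) (fin' n hn (2*m+2)) (fin' n hn (2*m+3))
      calc (1:ℝ) = 1 * 1 := (one_mul 1).symm
        _ ≤ (((List.range m).map fun i =>
              P3mat χ (fin' n hn (2*i+1)) (fin' n hn (2*i+2)) (fin' n hn (2*i+3))).prod)
                (FO n hn χ m (g τ)) (g τ) *
            P3mat χ (fin' n hn (2*m+1)) (fin' n hn (2*m+2)) (fin' n hn (2*m+3)) (g τ) τ := by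
              rw [P3mat_self χ hrev (fin'_ne hn (by omega) (by omega) (by omega))
                (fin'_ne hn (by omega) (by omega) (by omega)) τ]
              exact mul_le_mul_of_nonneg_right (ih (by omega) (g τ)) (by norm_num)
        _ ≤ _ := entry_mul_le (fun σ' τ' => prodO_nonneg hn χ m σ' τ')
              (fun σ' τ' => P3mat_nonneg χ _ _ _ σ' τ') _ (g τ) τ

/-! ### the one-step boundary-driven map Φ and its properties -/

def Phi (n : ℕ) (hn : 0 < n) (χ : ZMod 2 → ZMod 2 → ZMod 2 → ZMod 2)
    (τ : Fin n → ZMod 2) (a v : ZMod 2) : Fin n → ZMod 2 :=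
  Function.update
    (FO n hn χ ((n-2)/2) (FE n hn χ ((n-2)/2) (Function.update τ (fin' n hn (n-1)) v)))
    (fin' n hn 0) a

lemma U_step_pos (hn : 0 < n) (hn4 : 4 ≤ n) (hne : Even n)
    (χ : ZMod 2 → ZMod 2 → ZMod 2 → ZMod 2)
    (hrev : ∀ w m e : ZMod 2, χ w (χ w m e) e = m)
    (PL PR : Matrix (ZMod 2 × ZMod 2) (ZMod 2 × ZMod 2) ℝ)
    (hPLpos : ∀ p q, 0 ≤ PL p q) (hPRpos : ∀ p q, 0 ≤ PR p q)
    (hacc : ∀ s t s' : ZMod 2, 0 < PL (s, s') (t, s') ∧ 0 < PR (s', s) (s', t))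
    (τ : Fin n → ZMod 2) (a v : ZMod 2) :
    0 < (Uo n hn χ PL * Ue n hn χ PR) (Phi n hn χ τ a v) τ := by
  obtain ⟨r, hr⟩ := hne
  have hUe_nn : ∀ σ' τ', 0 ≤ Ue n hn χ PR σ' τ' := by
    intro σ' τ'; unfold Ue
    exact mul_nonneg' (fun x y => prodE_nonneg hn χ _ x y)
      (fun x y => P2mat_nonneg hPRpos _ _ x y) σ' τ'
  have hUo_nn : ∀ σ' τ', 0 ≤ Uo n hn χ PL σ' τ' := by
    intro σ' τ'; unfold Uo
    exact mul_nonneg' (fun x y => P2mat_nonneg hPLpos _ _ x y)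
      (fun x y => prodO_nonneg hn χ _ x y) σ' τ'
  have hUe : 0 < Ue n hn χ PR
      (FE n hn χ ((n-2)/2) (Function.update τ (fin' n hn (n-1)) v)) τ := by
    unfold Ue
    refine mul_entry_pos (fun x y => prodE_nonneg hn χ _ x y)
      (fun x y => P2mat_nonneg hPRpos _ _ x y) (Function.update τ (fin' n hn (n-1)) v)
      (lt_of_lt_of_le one_pos (prodE_entry hn χ hrev _ (by omega) _)) ?_
    rw [P2mat_update_right (fin'_ne hn (by omega) (by omega) (by omega))]
    exact (hacc v (τ (fin' n hn (n-1))) (τ (fin' n hn (n-2)))).2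
  have hUo : 0 < Uo n hn χ PL (Phi n hn χ τ a v)
      (FE n hn χ ((n-2)/2) (Function.update τ (fin' n hn (n-1)) v)) := by
    unfold Uo Phi
    refine mul_entry_pos (fun x y => P2mat_nonneg hPLpos _ _ x y)
      (fun x y => prodO_nonneg hn χ _ x y)
      (FO n hn χ ((n-2)/2) (FE n hn χ ((n-2)/2) (Function.update τ (fin' n hn (n-1)) v)))
      ?_ (lt_of_lt_of_le one_pos (prodO_entry hn χ hrev _ (by omega) _))
    rw [P2mat_update_left (fin'_ne hn (by omega) (by omega) (by omega))]
    exact (hacc a _ _).1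
  exact mul_entry_pos hUo_nn hUe_nn _ hUo hUe

/-! ### injectivity of the extended step map -/

lemma Phi_first (hn : 0 < n) (χ : ZMod 2 → ZMod 2 → ZMod 2 → ZMod 2)
    (τ : Fin n → ZMod 2) (a v : ZMod 2) :
    Phi n hn χ τ a v (fin' n hn 0) = a := Function.update_self _ _ _

lemma Phi_last (hn : 0 < n) (hn4 : 4 ≤ n) (hne : Even n)
    (χ : ZMod 2 → ZMod 2 → ZMod 2 → ZMod 2)
    (τ : Fin n → ZMod 2) (a v : ZMod 2) :
    Phi n hn χ τ a v (fin' n hn (n-1)) = v := by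
  obtain ⟨r, hr⟩ := hne
  unfold Phi
  rw [Function.update_of_ne (fin'_ne hn (by omega) (by omega) (by omega)),
    FO_eval_ne hn χ _ (by omega) _ _ (fun i hi => by rw [fin'_val hn (by omega)]; omega),
    FE_eval_ne hn χ _ (by omega) _ _ (fun i hi => by rw [fin'_val hn (by omega)]; omega),
    Function.update_self]

lemma Phi_inj (hn : 0 < n) (hn4 : 4 ≤ n) (hne : Even n)
    (χ : ZMod 2 → ZMod 2 → ZMod 2 → ZMod 2)
    (hrev : ∀ w m e : ZMod 2, χ w (χ w m e) e = m) :
    Function.Injective (fun x : (Fin n → ZMod 2) × ZMod 2 × ZMod 2 =>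
      (Phi n hn χ x.1 x.2.1 x.2.2, x.1 (fin' n hn 0), x.1 (fin' n hn (n-1)))) := by
  obtain ⟨r, hr⟩ := hne
  rintro ⟨τ, a, v⟩ ⟨τ', a', v'⟩ h
  simp only [Prod.mk.injEq] at h
  obtain ⟨h1, h2, h3⟩ := h
  have ha : a = a' := by
    rw [← Phi_first hn χ τ a v, h1, Phi_first]
  have hv : v = v' := by
    rw [← Phi_last hn hn4 ⟨r, hr⟩ χ τ a v, h1, Phi_last hn hn4 ⟨r, hr⟩]
  subst ha; subst hv
  have hX : FO n hn χ ((n-2)/2) (FE n hn χ ((n-2)/2) (Function.update τ (fin' n hn (n-1)) v))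
      = FO n hn χ ((n-2)/2) (FE n hn χ ((n-2)/2) (Function.update τ' (fin' n hn (n-1)) v)) := by
    funext k
    by_cases hk : k = fin' n hn 0
    · subst hk
      rw [FO_eval_ne hn χ _ (by omega) _ _ (fun i hi => by rw [fin'_val hn (by omega)]; omega),
        FE_eval_ne hn χ _ (by omega) _ _ (fun i hi => by rw [fin'_val hn (by omega)]; omega),
        Function.update_of_ne (fin'_ne hn (by omega) (by omega) (by omega)),
        FO_eval_ne hn χ _ (by omega) _ _ (fun i hi => by rw [fin'_val hn (by omega)]; omega),
        FE_eval_ne hn χ _ (by omega) _ _ (fun i hi => by rw [fin'_val hn (by omega)]; omega),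
        Function.update_of_ne (fin'_ne hn (by omega) (by omega) (by omega))]
      exact h2
    · have hthis := congrFun h1 k
      unfold Phi at hthis
      rwa [Function.update_of_ne hk, Function.update_of_ne hk] at hthis
  have hY := FE_inj hn χ hrev _ (by omega) (FO_inj hn χ hrev _ (by omega) hX)
  have hτ : τ = τ' := by
    funext k
    by_cases hk : k = fin' n hn (n-1)
    · subst hk; exact h3
    · have := congrFun hY k
      rwa [Function.update_of_ne hk, Function.update_of_ne hk] at this
  rw [hτ]

/-! ### the vacuum is a fixed point -/

lemma upd3_zero (χ : ZMod 2 → ZMod 2 → ZMod 2 → ZMod 2) (hvac : χ 0 0 0 = 0)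
    (a b c : Fin n) : upd3 χ a b c (0 : Fin n → ZMod 2) = 0 := by
  funext k
  by_cases h : k = b
  · subst h; simp [upd3, hvac]
  · simp [upd3, Function.update_of_ne h]

lemma update_zero (i : Fin n) : Function.update (0 : Fin n → ZMod 2) i 0 = 0 := by
  funext k
  by_cases h : k = i
  · subst h; simp
  · simp [Function.update_of_ne h]

lemma FE_zero (hn : 0 < n) (χ : ZMod 2 → ZMod 2 → ZMod 2 → ZMod 2)
    (hvac : χ 0 0 0 = 0) (m : ℕ) : FE n hn χ m 0 = 0 := by
  induction m with
  | zero => rfl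
  | succ m ih => rw [FE, upd3_zero χ hvac, ih]

lemma FO_zero (hn : 0 < n) (χ : ZMod 2 → ZMod 2 → ZMod 2 → ZMod 2)
    (hvac : χ 0 0 0 = 0) (m : ℕ) : FO n hn χ m 0 = 0 := by
  induction m with
  | zero => rfl
  | succ m ih => rw [FO, upd3_zero χ hvac, ih]

lemma Phi_zero (hn : 0 < n) (χ : ZMod 2 → ZMod 2 → ZMod 2 → ZMod 2)
    (hvac : χ 0 0 0 = 0) : Phi n hn χ 0 0 0 = 0 := by
  unfold Phi
  rw [update_zero, FE_zero hn χ hvac, FO_zero hn χ hvac, update_zero]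

/-! ### emulation of the infinite bulk dynamics -/

lemma step_emulate (hn : 0 < n) (hn4 : 4 ≤ n) (hne : Even n)
    (χ : ZMod 2 → ZMod 2 → ZMod 2 → ZMod 2)
    (c : ℤ → ZMod 2) (d : Fin n → ZMod 2)
    (hd : ∀ k : Fin n, d k = c ((k : ℕ) + 1)) :
    ∀ k : Fin n, Phi n hn χ d (stepO χ (stepE χ c) 1) (stepE χ c (n : ℤ)) k
      = stepO χ (stepE χ c) ((k : ℕ) + 1) := by
  obtain ⟨r, hr⟩ := hne
  set c' := stepE χ c with hc'
  set c'' := stepO χ c' with hc''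
  have hc'E : ∀ x : ℤ, Even x → c' x = χ (c (x-1)) (c x) (c (x+1)) := by
    intro x hx; rw [hc']; unfold stepE; rw [if_pos hx]
  have hc'O : ∀ x : ℤ, ¬ Even x → c' x = c x := by
    intro x hx; rw [hc']; unfold stepE; rw [if_neg hx]
  have hc''O : ∀ x : ℤ, ¬ Even x → c'' x = χ (c' (x-1)) (c' x) (c' (x+1)) := by
    intro x hx; rw [hc'']; unfold stepO; rw [if_pos hx]
  have hc''E : ∀ x : ℤ, Even x → c'' x = c' x := by
    intro x hx; rw [hc'']; unfold stepO; rw [if_neg (not_not_intro hx)]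
  set τ1 := Function.update d (fin' n hn (n-1)) (c' (n : ℤ)) with hτ1
  have hτ1v : ∀ j : ℕ, j + 1 < n → τ1 (fin' n hn j) = c ((j : ℤ) + 1) := by
    intro j hj
    rw [hτ1, Function.update_of_ne (fin'_ne hn (by omega) (by omega) (by omega)), hd,
      fin'_val hn (by omega)]
  have hA : ∀ k : Fin n, FE n hn χ ((n-2)/2) τ1 k = c' ((k : ℕ) + 1) := by
    intro k
    have hkn := k.isLt
    rcases Nat.even_or_odd (k : ℕ) with he | ho
    · obtain ⟨j, hj⟩ := he
      have hne1 : ¬ Even (((k : ℕ) : ℤ) + 1) := by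
        rw [Int.even_add_one, not_not, Int.even_coe_nat, Nat.even_iff]; omega
      rw [FE_eval_ne hn χ _ (by omega) _ _ (fun i hi => by omega),
        hτ1, Function.update_of_ne (ne_fin' hn (by omega) (by omega)), hd, hc'O _ hne1]
    · obtain ⟨j, hj⟩ := ho
      by_cases hlast : (k : ℕ) = n - 1
      · have hk : k = fin' n hn (n-1) := by
          apply Fin.ext; rw [fin'_val hn (by omega)]; exact hlast
        rw [FE_eval_ne hn χ _ (by omega) _ _ (fun i hi => by omega), hk, hτ1,
          Function.update_self]
        congr 1
        rw [fin'_val hn (by omega)]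
        omega
      · have hjm : j < (n-2)/2 := by omega
        have hk : k = fin' n hn (2*j+1) := by
          apply Fin.ext; rw [fin'_val hn (by omega)]; omega
        have heven : Even ((((2*j+1 : ℕ)) : ℤ) + 1) := by
          rw [Int.even_add_one, Int.even_coe_nat, Nat.even_iff]; omega
        rw [hk, FE_eval_mid hn χ _ (by omega) _ j hjm,
          hτ1v (2*j) (by omega), hτ1v (2*j+1) (by omega), hτ1v (2*j+2) (by omega),
          fin'_val hn (by omega), hc'E _ heven]
        congr 1 <;> push_cast <;> ring
  have hAj : ∀ j : ℕ, j < n → FE n hn χ ((n-2)/2) τ1 (fin' n hn j) = c' ((j : ℤ) + 1) := by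
    intro j hj
    rw [hA (fin' n hn j), fin'_val hn hj]
  have hB : ∀ k : Fin n, (k : ℕ) ≠ 0 →
      FO n hn χ ((n-2)/2) (FE n hn χ ((n-2)/2) τ1) k = c'' ((k : ℕ) + 1) := by
    intro k hk0
    have hkn := k.isLt
    rcases Nat.even_or_odd (k : ℕ) with he | ho
    · obtain ⟨j, hj⟩ := he
      have hi : j - 1 < (n-2)/2 := by omega
      have hk : k = fin' n hn (2*(j-1)+2) := by
        apply Fin.ext; rw [fin'_val hn (by omega)]; omega
      have hodd : ¬ Even ((((2*(j-1)+2 : ℕ)) : ℤ) + 1) := by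
        rw [Int.even_add_one, not_not, Int.even_coe_nat, Nat.even_iff]; omega
      rw [hk, FO_eval_mid hn χ _ (by omega) _ (j-1) hi,
        hAj (2*(j-1)+1) (by omega), hAj (2*(j-1)+2) (by omega), hAj (2*(j-1)+3) (by omega),
        fin'_val hn (by omega), hc''O _ hodd]
      congr 1 <;> push_cast <;> ring
    · obtain ⟨j, hj⟩ := ho
      have heven : Even (((k : ℕ) : ℤ) + 1) := by
        rw [Int.even_add_one, Int.even_coe_nat, Nat.even_iff]; omega
      rw [FO_eval_ne hn χ _ (by omega) _ _ (fun i hi => by omega), hA k, hc''E _ heven]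
  intro k
  by_cases hk0 : k = fin' n hn 0
  · subst hk0
    unfold Phi
    rw [← hτ1, Function.update_self]
    have : ((((fin' n hn 0 : Fin n) : ℕ)) : ℤ) + 1 = 1 := by
      rw [fin'_val hn (by omega)]; norm_num
    rw [this]
  · have hkval : (k : ℕ) ≠ 0 := by
      intro h
      exact hk0 (by apply Fin.ext; rw [fin'_val hn (by omega)]; exact h)
    unfold Phi
    rw [← hτ1, Function.update_of_ne hk0]
    exact hB k hkval

/-! ### reaching the vacuum via asymptotic abelianness -/

lemma traj (hn : 0 < n) (hn4 : 4 ≤ n) (hne : Even n)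
    (χ : ZMod 2 → ZMod 2 → ZMod 2 → ZMod 2)
    (habel : ∀ (A : Finset ℤ) (c : ℤ → ZMod 2), (∀ x : ℤ, x ∉ A → c x = 0) →
      ∀ B : Finset ℤ, ∃ tstar : ℕ, ∀ t : ℕ, tstar < t →
        ∀ x ∈ B, (bulkStep χ)^[t] c x = 0)
    (τ : Fin n → ZMod 2) :
    ∃ T : ℕ, 0 < T ∧ ∃ D : ℕ → Fin n → ZMod 2,
      D 0 = τ ∧ D T = 0 ∧ ∀ t : ℕ, ∃ a v, D (t+1) = Phi n hn χ (D t) a v := by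
  classical
  set c0 : ℤ → ZMod 2 :=
    fun x => if h : 1 ≤ x ∧ x ≤ (n : ℤ) then τ (fin' n hn (x-1).toNat) else 0 with hc0
  obtain ⟨tstar, hts⟩ := habel (Finset.Icc 1 (n : ℤ)) c0
    (by
      intro x hx
      rw [hc0]
      simp only
      rw [dif_neg]
      rintro ⟨hx1, hx2⟩
      exact hx (Finset.mem_Icc.mpr ⟨hx1, hx2⟩))
    (Finset.Icc 1 (n : ℤ))
  refine ⟨tstar + 1, Nat.succ_pos _,
    fun t k => (bulkStep χ)^[t] c0 ((k : ℕ) + 1), ?_, ?_, ?_⟩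
  · funext k
    have hkn := k.isLt
    simp only [Function.iterate_zero, id_eq]
    rw [hc0]
    simp only
    rw [dif_pos ⟨by omega, by omega⟩]
    congr 1
    apply Fin.ext
    rw [fin'_val hn (by omega)]
    omega
  · funext k
    have hkn := k.isLt
    exact hts (tstar+1) (by omega) ((k : ℕ) + 1)
      (Finset.mem_Icc.mpr ⟨by omega, by omega⟩)
  · intro t
    refine ⟨stepO χ (stepE χ ((bulkStep χ)^[t] c0)) 1,
      stepE χ ((bulkStep χ)^[t] c0) (n : ℤ), ?_⟩
    funext k
    have hstep := step_emulate hn hn4 hne χ ((bulkStep χ)^[t] c0)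
      (fun k' : Fin n => (bulkStep χ)^[t] c0 ((k' : ℕ) + 1)) (fun _ => rfl) k
    show (bulkStep χ)^[t+1] c0 ((k : ℕ) + 1) = _
    rw [Function.iterate_succ_apply']
    rw [show bulkStep χ ((bulkStep χ)^[t] c0) = stepO χ (stepE χ ((bulkStep χ)^[t] c0)) from rfl]
    exact hstep.symm
end Holo

open Holo

/-- Holographic ergodicity. -/
theorem holographic_ergodicity
    (χ : ZMod 2 → ZMod 2 → ZMod 2 → ZMod 2)
    (hrev : ∀ w n e : ZMod 2, χ w (χ w n e) e = n)
    (hvac : χ 0 0 0 = 0)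
    (n : ℕ) (hn : 4 ≤ n) (hne : Even n)
    (PL PR : Matrix (ZMod 2 × ZMod 2) (ZMod 2 × ZMod 2) ℝ)
    -- P^L, P^R are stochastic matrices
    (hPLpos : ∀ p q, 0 ≤ PL p q) (hPLsum : ∀ q, (∑ p, PL p q) = 1)
    (hPRpos : ∀ p q, 0 ≤ PR p q) (hPRsum : ∀ q, (∑ p, PR p q) = 1)
    -- (i) both boundary cell states are accessible from any configuration
    (hacc : ∀ s t s' : ZMod 2, 0 < PL (s, s') (t, s') ∧ 0 < PR (s', s) (s', t))
    -- (ii) the bulk deterministic dynamics is asymptotically abelian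
    (habel : ∀ (A : Finset ℤ) (c : ℤ → ZMod 2), (∀ x : ℤ, x ∉ A → c x = 0) →
      ∀ B : Finset ℤ, ∃ tstar : ℕ, ∀ t : ℕ, tstar < t →
        ∀ x ∈ B, (bulkStep χ)^[t] c x = 0) :
    -- U is irreducible
    (∀ σ τ : Fin n → ZMod 2, ∃ t₀ : ℕ,
      0 < ((Uo n (by omega) χ PL * Ue n (by omega) χ PR) ^ t₀) σ τ) ∧
    -- U is aperiodic
    (∃ σ : Fin n → ZMod 2, ∀ d : ℕ,
      (∀ t : ℕ, 0 < t →
        0 < ((Uo n (by omega) χ PL * Ue n (by omega) χ PR) ^ t) σ σ → d ∣ t) →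
      d = 1) := by

  classical
  have hn0 : 0 < n := by omega
  set U : Matrix (Fin n → ZMod 2) (Fin n → ZMod 2) ℝ := Uo n hn0 χ PL * Ue n hn0 χ PR with hUdef
  -- nonnegativity
  have hUe_nn : ∀ σ τ, 0 ≤ Ue n hn0 χ PR σ τ := by
    intro σ τ; unfold Ue
    exact mul_nonneg' (fun x y => prodE_nonneg hn0 χ _ x y)
      (fun x y => P2mat_nonneg hPRpos _ _ x y) σ τ
  have hUo_nn : ∀ σ τ, 0 ≤ Uo n hn0 χ PL σ τ := by
    intro σ τ; unfold Uo
    exact mul_nonneg' (fun x y => P2mat_nonneg hPLpos _ _ x y)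
      (fun x y => prodO_nonneg hn0 χ _ x y) σ τ
  have hUnn : ∀ σ τ, 0 ≤ U σ τ := by
    rw [hUdef]; exact fun σ τ => mul_nonneg' hUo_nn hUe_nn σ τ
  have hUpow : ∀ (t : ℕ) σ τ, 0 ≤ (U ^ t) σ τ := by
    intro t
    induction t with
    | zero => intro σ τ; rw [pow_zero]; exact one_nonneg' σ τ
    | succ t ih => intro σ τ; rw [pow_succ]; exact mul_nonneg' ih hUnn σ τ
  -- one-step positivity along Φ
  have hstep : ∀ (τ : Fin n → ZMod 2) (a v : ZMod 2), 0 < U (Phi n hn0 χ τ a v) τ := by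
    rw [hUdef]
    exact fun τ a v => U_step_pos hn0 hn hne χ hrev PL PR hPLpos hPRpos hacc τ a v
  -- the reachable-from-vacuum predicate
  set p : (Fin n → ZMod 2) → Prop := fun σ => ∃ t : ℕ, 0 < (U ^ t) σ 0 with hp
  have hvacR : p 0 := ⟨0, by rw [pow_zero, Matrix.one_apply_eq]; norm_num⟩
  have hfwd : ∀ σ a v, p σ → p (Phi n hn0 χ σ a v) := by
    rintro σ a v ⟨t, ht⟩
    refine ⟨t + 1, ?_⟩
    rw [pow_succ']
    exact lt_of_lt_of_le (mul_pos (hstep σ a v) ht)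
      (entry_mul_le hUnn (hUpow t) _ σ _)
  -- counting: backward closure
  have hbwd : ∀ τ a v, p (Phi n hn0 χ τ a v) → p τ := by
    intro τ a v hPhi
    set Φ' : ((Fin n → ZMod 2) × ZMod 2 × ZMod 2) → ((Fin n → ZMod 2) × ZMod 2 × ZMod 2) :=
      fun x => (Phi n hn0 χ x.1 x.2.1 x.2.2, x.1 (fin' n hn0 0), x.1 (fin' n hn0 (n-1)))
      with hΦ'
    have hinj : Function.Injective Φ' := Phi_inj hn0 hn hne χ hrev
    have hbij : Function.Bijective Φ' := Finite.injective_iff_bijective.mp hinj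
    obtain ⟨G, hG1, hG2⟩ := Function.bijective_iff_has_inverse.mp hbij
    set R : Finset (Fin n → ZMod 2) := Finset.univ.filter p with hR
    set S : Finset ((Fin n → ZMod 2) × ZMod 2 × ZMod 2) :=
      Finset.univ.filter (fun x => Phi n hn0 χ x.1 x.2.1 x.2.2 ∈ R) with hS
    have hΦ'S : ∀ x, x ∈ S ↔ Φ' x ∈ R ×ˢ (Finset.univ : Finset (ZMod 2 × ZMod 2)) := by
      intro x
      simp only [hS, Finset.mem_filter, Finset.mem_univ, true_and, Finset.mem_product, and_true]
      exact Iff.rfl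
    have hcard : S.card = (R ×ˢ (Finset.univ : Finset (ZMod 2 × ZMod 2))).card := by
      apply Finset.card_bij' (fun x _ => Φ' x) (fun y _ => G y)
      · intro x hx; exact (hΦ'S x).mp hx
      · intro y hy
        apply (hΦ'S (G y)).mpr
        rw [hG2 y]; exact hy
      · intro x _; exact hG1 x
      · intro y _; exact hG2 y
    have hsub : R ×ˢ (Finset.univ : Finset (ZMod 2 × ZMod 2)) ⊆ S := by
      intro x hx
      rw [Finset.mem_product] at hx
      simp only [hS, Finset.mem_filter, Finset.mem_univ, true_and]
      have hx1 : p x.1 := by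
        have := hx.1; rw [hR] at this
        simpa using this
      have := hfwd x.1 x.2.1 x.2.2 hx1
      rw [hR]; simpa using this
    have hSeq : R ×ˢ (Finset.univ : Finset (ZMod 2 × ZMod 2)) = S :=
      Finset.eq_of_subset_of_card_le hsub (le_of_eq hcard)
    have hmem : (τ, a, v) ∈ S := by
      simp only [hS, Finset.mem_filter, Finset.mem_univ, true_and]
      rw [hR]; simpa using hPhi
    rw [← hSeq, Finset.mem_product] at hmem
    have := hmem.1
    rw [hR] at this
    simpa using this
  -- trajectories to the vacuum
  have htraj := fun τ => traj hn0 hn hne χ habel τ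
  -- every configuration is reachable from the vacuum
  have hall : ∀ τ, p τ := by
    intro τ
    obtain ⟨T, hT, D, hD0, hDT, hDstep⟩ := htraj τ
    have hback : ∀ j : ℕ, p (D (T - j)) := by
      intro j
      induction j with
      | zero => rw [Nat.sub_zero, hDT]; exact hvacR
      | succ j ih =>
          by_cases hj : j < T
          · obtain ⟨a, v, hav⟩ := hDstep (T - (j+1))
            apply hbwd (D (T - (j+1))) a v
            rw [← hav, show T - (j+1) + 1 = T - j by omega]
            exact ih
          · rw [show T - (j+1) = T - j by omega]
            exact ih
    have := hback T
    rwa [Nat.sub_self, hD0] at this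
  -- the vacuum is reachable from every configuration
  have hreach0 : ∀ τ, ∃ T : ℕ, 0 < (U ^ T) 0 τ := by
    intro τ
    obtain ⟨T, hT, D, hD0, hDT, hDstep⟩ := htraj τ
    have hfwd2 : ∀ t : ℕ, 0 < (U ^ t) (D t) τ := by
      intro t
      induction t with
      | zero => rw [pow_zero, hD0, Matrix.one_apply_eq]; norm_num
      | succ t ih =>
          obtain ⟨a, v, hav⟩ := hDstep t
          rw [pow_succ']
          refine lt_of_lt_of_le (mul_pos ?_ ih) (entry_mul_le hUnn (hUpow t) _ (D t) _)
          rw [hav]; exact hstep (D t) a v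
    refine ⟨T, ?_⟩
    have := hfwd2 T
    rwa [hDT] at this
  constructor
  · intro σ τ
    obtain ⟨t₂, h2⟩ := hall σ
    obtain ⟨t₁, h1⟩ := hreach0 τ
    refine ⟨t₂ + t₁, ?_⟩
    show 0 < (U ^ (t₂ + t₁)) σ τ
    rw [pow_add]
    exact lt_of_lt_of_le (mul_pos h2 h1) (entry_mul_le (hUpow t₂) (hUpow t₁) σ 0 τ)
  · refine ⟨0, fun d hd => Nat.dvd_one.mp ?_⟩
    apply hd 1 one_pos
    show 0 < (U ^ 1) 0 0
    rw [pow_one]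
    have := hstep 0 0 0
    rwa [Phi_zero hn0 χ hvac] at this


end
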